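/- Let (Ω, ℱ, P) be a probability space with integrable real random variables Y₀(0), Y₁(0), Y₁(1) and binary random variables D, D* : Ω → {0,1} with P(D=1) > 0 and P(D=0) > 0. Define the observed outcomes Y₀ := Y₀(0) and Y₁ := D*·Y₁(1) + (1−D*)·Y₁(0). Then DID(D) := E[Y₁−Y₀ | D=1] − E[Y₁−Y₀ | D=0] = (E[D*·(Y₁(1)−Y₁(0)) | D=1] − E[D*·(Y₁(1)−Y₁(0)) | D=0]) + DT(D), where DT(D) := E[Y₁(0)−Y₀(0) | D=1] − E[Y₁(0)−Y₀(0) | D=0]. Moreover, if D ≤ D* almost surely (one-sided misclassification), then E[D*·(Y₁(1)−Y₁(0)) | D=1] = E[Y₁(1)−Y₁(0) | D=1]. -/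

import Mathlib

open MeasureTheory ProbabilityTheory

/-- Conditional expectation of `Y` given the event `A`: `E[Y · 1_A] / P(A)`. -/
noncomputable def cexp {Ω : Type*} [MeasureSpace Ω] (Y : Ω → ℝ) (A : Set Ω) : ℝ :=
  (∫ ω in A, Y ω) / ((ℙ : Measure Ω) A).toReal


lemma cexp_add {Ω : Type*} [MeasureSpace Ω] {g h : Ω → ℝ} (hg : Integrable g)
    (hh : Integrable h) (A : Set Ω) :
    cexp (fun ω => g ω + h ω) A = cexp g A + cexp h A := by
  unfold cexp
  rw [MeasureTheory.integral_add hg.integrableOn hh.integrableOn, add_div]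

/-- **Decomposition of the DID estimand under misclassification (equation (6) of the paper).**
With observed outcomes `Y₀ = Y₀(0)` and `Y₁ = D*·Y₁(1) + (1 − D*)·Y₁(0)`,
`DID(D) = (E[D*(Y₁(1)−Y₁(0)) | D=1] − E[D*(Y₁(1)−Y₁(0)) | D=0]) + DT(D)`; moreover under
one-sided misclassification `D ≤ D*` a.s., the first conditional expectation equals
`E[Y₁(1)−Y₁(0) | D=1]`. -/
theorem did_decomposition_under_misclassification
    {Ω : Type*} [MeasureSpace Ω] [IsProbabilityMeasure (ℙ : Measure Ω)]
    (Y00 Y10 Y11 : Ω → ℝ) (D Dstar : Ω → ℝ)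
    (hY00 : Integrable Y00) (hY10 : Integrable Y10) (hY11 : Integrable Y11)
    (hDmeas : Measurable D) (hDsmeas : Measurable Dstar)
    (hDbin : ∀ ω, D ω = 0 ∨ D ω = 1) (hDsbin : ∀ ω, Dstar ω = 0 ∨ Dstar ω = 1)
    (hD1 : 0 < (ℙ : Measure Ω) {ω | D ω = 1})
    (hD0 : 0 < (ℙ : Measure Ω) {ω | D ω = 0}) :
    (cexp (fun ω => (Dstar ω * Y11 ω + (1 - Dstar ω) * Y10 ω) - Y00 ω) {ω | D ω = 1}
        - cexp (fun ω => (Dstar ω * Y11 ω + (1 - Dstar ω) * Y10 ω) - Y00 ω) {ω | D ω = 0}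
      = (cexp (fun ω => Dstar ω * (Y11 ω - Y10 ω)) {ω | D ω = 1}
          - cexp (fun ω => Dstar ω * (Y11 ω - Y10 ω)) {ω | D ω = 0})
        + (cexp (fun ω => Y10 ω - Y00 ω) {ω | D ω = 1}
            - cexp (fun ω => Y10 ω - Y00 ω) {ω | D ω = 0}))
    ∧ ((∀ᵐ ω ∂(ℙ : Measure Ω), D ω ≤ Dstar ω) →
        cexp (fun ω => Dstar ω * (Y11 ω - Y10 ω)) {ω | D ω = 1}
          = cexp (fun ω => Y11 ω - Y10 ω) {ω | D ω = 1}) := by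
  have hDiff : Integrable (fun ω => Y11 ω - Y10 ω) := hY11.sub hY10
  have hg : Integrable (fun ω => Dstar ω * (Y11 ω - Y10 ω)) := by
    apply hDiff.bdd_mul (c := 1) hDsmeas.aestronglyMeasurable
    refine ae_of_all _ (fun ω => ?_)
    rcases hDsbin ω with h | h <;> simp [h]
  have hh : Integrable (fun ω => Y10 ω - Y00 ω) := hY10.sub hY00
  have key : ∀ ω, (Dstar ω * Y11 ω + (1 - Dstar ω) * Y10 ω) - Y00 ω
      = Dstar ω * (Y11 ω - Y10 ω) + (Y10 ω - Y00 ω) := by intro ω; ring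
  constructor
  · have h1 : ∀ A : Set Ω,
        cexp (fun ω => (Dstar ω * Y11 ω + (1 - Dstar ω) * Y10 ω) - Y00 ω) A
          = cexp (fun ω => Dstar ω * (Y11 ω - Y10 ω)) A
            + cexp (fun ω => Y10 ω - Y00 ω) A := by
      intro A
      rw [show (fun ω => (Dstar ω * Y11 ω + (1 - Dstar ω) * Y10 ω) - Y00 ω)
          = (fun ω => Dstar ω * (Y11 ω - Y10 ω) + (Y10 ω - Y00 ω)) from funext key]
      exact cexp_add hg hh A
    rw [h1, h1]; ring
  · intro hle
    have hA : MeasurableSet {ω | D ω = 1} := hDmeas (measurableSet_singleton 1)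
    have : ∫ ω in {ω | D ω = 1}, Dstar ω * (Y11 ω - Y10 ω)
        = ∫ ω in {ω | D ω = 1}, (Y11 ω - Y10 ω) := by
      apply MeasureTheory.setIntegral_congr_ae hA
      filter_upwards [hle] with ω hω hmem
      have hD1 : D ω = 1 := hmem
      rcases hDsbin ω with h | h
      · rw [hD1, h] at hω; linarith
      · simp [h]
    unfold cexp
    rw [this]
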